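/- If a nonempty word x of length at least n is non-cyclic (not a proper power), then the word x^{2n} is n-divisible: the n cyclic shifts of x starting at positions 1,…,n within x² are pairwise comparable, and suitable disjoint occurrences of them inside x^{2n} go in strictly decreasing lexicographic order. -/

import Mathlib

variable {α : Type*} [LinearOrder α]

/-- `u` repeated `d` times. -/
def wpow (u : List α) (d : ℕ) : List α := (List.replicate d u).flatten

/-- Two words are comparable if neither is a prefix of the other. -/
def WComparable (u v : List α) : Prop := ¬ u <+: v ∧ ¬ v <+: u

/-- A word `W` is `n`-divisible if `W = v ++ u₁ ++ ⋯ ++ uₙ` with the nonempty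
words `u₁ ≻ u₂ ≻ ⋯ ≻ uₙ` strictly decreasing in the lexicographic order. -/
def NDivisible (n : ℕ) (W : List α) : Prop :=
  ∃ (v : List α) (u : Fin n → List α), (∀ i, u i ≠ []) ∧
    W = v ++ (List.ofFn u).flatten ∧
    ∀ i j : Fin n, i < j → List.Lex (· < ·) (u j) (u i)

section Aux

lemma join_eq_flatten (l : List (List α)) : l.flatten = l.flatten := rfl

lemma wpow_add (u : List α) (m k : ℕ) : wpow u (m + k) = wpow u m ++ wpow u k := by
  unfold wpow
  rw [List.replicate_add, join_eq_flatten, join_eq_flatten, join_eq_flatten,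
    List.flatten_append]

lemma wpow_zero (u : List α) : wpow u 0 = [] := rfl

lemma wpow_one (u : List α) : wpow u 1 = u := by simp [wpow]

lemma length_wpow (u : List α) (d : ℕ) : (wpow u d).length = d * u.length := by
  induction d with
  | zero => simp [wpow]
  | succ d ih =>
    rw [show d + 1 = d + 1 from rfl, wpow_add, wpow_one, List.length_append, ih]
    ring

/-- Commuting words are powers of a common word. -/
lemma comm_wpow : ∀ (N : ℕ) (a b : List α), a.length + b.length ≤ N →
    a ++ b = b ++ a → ∃ (c : List α) (m k : ℕ), a = wpow c m ∧ b = wpow c k := by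
  intro N
  induction N with
  | zero =>
    intro a b hN _
    have ha : a = [] := List.length_eq_zero_iff.mp (by omega)
    have hb : b = [] := List.length_eq_zero_iff.mp (by omega)
    exact ⟨[], 0, 0, by simp [ha, wpow_zero], by simp [hb, wpow_zero]⟩
  | succ N ih =>
    intro a b hN hcomm
    rcases eq_or_ne a [] with ha | ha
    · exact ⟨b, 0, 1, by simp [ha, wpow_zero], by simp [wpow_one]⟩
    rcases eq_or_ne b [] with hb | hb
    · exact ⟨a, 1, 0, by simp [wpow_one], by simp [hb, wpow_zero]⟩
    rcases le_total a.length b.length with hle | hle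
    · -- a is a prefix of b
      have hab : a = (a ++ b).take a.length := by simp
      rw [hcomm, List.take_append_of_le_length hle] at hab
      set b' := b.drop a.length with hb'
      have hsplit : b = a ++ b' := by
        conv_lhs => rw [← List.take_append_drop a.length b, ← hab]
      have hcomm' : a ++ b' = b' ++ a := by
        apply List.append_cancel_left (as := a)
        have h := hcomm
        rw [hsplit] at h
        simp only [← List.append_assoc]
        simp only [← List.append_assoc] at h
        exact h
      have hlen' : a.length + b'.length ≤ N := by
        have h1 : 0 < a.length := List.length_pos_iff.mpr ha
        have : b'.length = b.length - a.length := by simp [hb']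
        omega
      obtain ⟨c, m, k, hA, hB⟩ := ih a b' hlen' hcomm'
      exact ⟨c, m, m + k, hA, by rw [hsplit, wpow_add, hA, hB]⟩
    · -- b is a prefix of a
      have hab : b = (b ++ a).take b.length := by simp
      rw [← hcomm, List.take_append_of_le_length hle] at hab
      set a' := a.drop b.length with ha'
      have hsplit : a = b ++ a' := by
        conv_lhs => rw [← List.take_append_drop b.length a, ← hab]
      have hcomm' : b ++ a' = a' ++ b := by
        apply List.append_cancel_left (as := b)
        have h := hcomm.symm
        rw [hsplit] at h
        simp only [← List.append_assoc]
        simp only [← List.append_assoc] at h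
        exact h
      have hlen' : b.length + a'.length ≤ N := by
        have h1 : 0 < b.length := List.length_pos_iff.mpr hb
        have : a'.length = a.length - b.length := by simp [ha']
        omega
      obtain ⟨c, m, k, hB, hA⟩ := ih b a' hlen' hcomm'
      exact ⟨c, m + k, m, by rw [hsplit, wpow_add, hA, hB], hB⟩

/-- A word fixed by a nontrivial rotation is a proper power. -/
lemma rotate_fix_pow (x : List α) (m : ℕ) (hm : 0 < m) (hmL : m < x.length)
    (hrot : x.rotate m = x) : ∃ (v : List α) (k : ℕ), 1 < k ∧ x = wpow v k := by
  have hx : x.rotate m = x.drop m ++ x.take m := List.rotate_eq_drop_append_take hmL.le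
  set a := x.take m with haa
  set b := x.drop m with hbb
  have hxab : a ++ b = x := List.take_append_drop m x
  have hcomm : b ++ a = a ++ b := by rw [hxab, ← hx, hrot]
  obtain ⟨c, k', m', hB, hA⟩ :=
    comm_wpow (b.length + a.length) b a le_rfl hcomm
  have hla : a.length = m := by simp [haa]; omega
  have hlb : b.length = x.length - m := by simp [hbb]
  have hm' : 1 ≤ m' := by
    by_contra h
    have : m' = 0 := by omega
    rw [this, wpow_zero] at hA
    have := congrArg List.length hA
    simp [hla] at this
    omega
  have hk' : 1 ≤ k' := by
    by_contra h
    have : k' = 0 := by omega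
    rw [this, wpow_zero] at hB
    have := congrArg List.length hB
    simp [hlb] at this
    omega
  refine ⟨c, m' + k', by omega, ?_⟩
  rw [← hxab, wpow_add, hA, hB]

/-- Extend a strict Lex inequality along non-prefix pairs to appended words. -/
lemma lex_append_of_lex {s r u v : List α} (h : List.Lex (· < ·) s r)
    (hp : ¬ s <+: r) : List.Lex (· < ·) (s ++ u) (r ++ v) := by
  induction h with
  | nil => exact absurd (List.nil_prefix) hp
  | @cons a l₁ l₂ h ih =>
    exact List.Lex.cons (ih (fun hpre => hp (List.cons_prefix_cons.mpr ⟨rfl, hpre⟩)))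
  | @rel a l₁ b l₂ hab => exact List.Lex.rel hab

/-- Telescoping decomposition of a list along a sequence of cut points. -/
lemma join_ofFn_take_drop (n : ℕ) : ∀ (W : List α) (p : ℕ → ℕ),
    (∀ k, k < n → p k ≤ p (k + 1)) → W.length ≤ p n →
    (List.ofFn (fun k : Fin n => (W.drop (p k)).take (p (k + 1) - p k))).flatten
      = W.drop (p 0) := by
  induction n with
  | zero =>
    intro W p _ hend
    simp [List.drop_eq_nil_of_le hend]
  | succ n ih =>
    intro W p hmono hend
    rw [List.ofFn_succ, join_eq_flatten, List.flatten_cons]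
    have htail :
        (List.ofFn (fun k : Fin n =>
            (W.drop (p (k + 1))).take (p (k + 1 + 1) - p (k + 1)))).flatten
          = W.drop (p 1) := by
      exact ih W (fun k => p (k + 1)) (fun k hk => hmono (k + 1) (by omega)) hend
    have hcast : (List.ofFn fun k : Fin n =>
        (W.drop (p (↑(Fin.succ k)))).take (p (↑(Fin.succ k) + 1) - p (↑(Fin.succ k))))
        = (List.ofFn fun k : Fin n =>
        (W.drop (p (k + 1))).take (p (k + 1 + 1) - p (k + 1))) := by
      congr 1
    rw [← join_eq_flatten, hcast, htail]
    have h01 : p 0 ≤ p 1 := hmono 0 (by omega)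
    have : (W.drop (p 0)).take (p 1 - p 0) ++ (W.drop (p 0)).drop (p 1 - p 0)
        = W.drop (p 0) := List.take_append_drop _ _
    rw [List.drop_drop, show p 0 + (p 1 - p 0) = p 1 by omega] at this
    exact this

lemma prefix_take_of_prefix {s l : List α} {m : ℕ} (h : s <+: l)
    (hm : s.length ≤ m) : s <+: l.take m :=
  List.prefix_take_iff.mpr ⟨h, hm⟩

end Aux

/-- If `x` is a nonempty primitive (non-cyclic) word of length at least `n`,
then its `n` cyclic shifts starting at the first `n` positions are pairwise
comparable, and `x ^ (2n)` is `n`-divisible. -/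
theorem stmt14 (n : ℕ) (hn : 1 ≤ n) (x : List α) (hx : x ≠ [])
    (hlen : n ≤ x.length)
    (hprim : ¬ ∃ (v : List α) (k : ℕ), 1 < k ∧ x = wpow v k) :
    (∀ i j : ℕ, i < n → j < n → i ≠ j → WComparable (x.rotate i) (x.rotate j)) ∧
    NDivisible n (wpow x (2 * n)) := by
  set L := x.length with hL
  have hL1 : 1 ≤ L := by
    rcases x with _ | _ <;> simp_all
  -- rotations at distinct positions < n are distinct
  have hdistinct : ∀ i j : ℕ, i < n → j < n → i ≠ j → x.rotate i ≠ x.rotate j := by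
    have key : ∀ i j : ℕ, i < j → j < n → x.rotate i ≠ x.rotate j := by
      intro i j hij hj heq
      have hfix : x.rotate (j - i) = x := by
        have h1 : (x.rotate i).rotate (L - i) = x := by
          rw [List.rotate_rotate, show i + (L - i) = L by omega, hL, List.rotate_length]
        have h2 : (x.rotate j).rotate (L - i) = x.rotate (L + (j - i)) := by
          rw [List.rotate_rotate]; congr 1; omega
        have h3 : x.rotate (L + (j - i)) = x.rotate (j - i) := by
          rw [← List.rotate_rotate, hL, List.rotate_length]
        rw [heq, h2, h3] at h1
        exact h1
      exact hprim (rotate_fix_pow x (j - i) (by omega) (by omega) hfix)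
    intro i j hi hj hij
    rcases Nat.lt_or_ge i j with h | h
    · exact key i j h hj
    · exact fun heq => key j i (by omega) hi heq.symm
  have hcomp : ∀ i j : ℕ, i < n → j < n → i ≠ j →
      WComparable (x.rotate i) (x.rotate j) := by
    intro i j hi hj hij
    constructor
    · intro hpre
      exact hdistinct i j hi hj hij
        (hpre.eq_of_length (by simp))
    · intro hpre
      exact hdistinct j i hj hi (Ne.symm hij)
        (hpre.eq_of_length (by simp))
  refine ⟨hcomp, ?_⟩
  -- sort the rotations in decreasing lexicographic order
  set f : Fin n → List α := fun i => x.rotate i with hf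
  have hfinj : Function.Injective f := by
    intro i j hij
    by_contra hne
    exact hdistinct i j i.isLt j.isLt (fun h => hne (Fin.ext h)) hij
  set σ := Tuple.sort f with hσ
  have hsm : StrictMono (f ∘ σ) :=
    (Tuple.monotone_sort f).strictMono_of_injective (hfinj.comp σ.injective)
  set τ : Fin n → Fin n := fun k => σ k.rev with hτ
  have hdec : ∀ k l : Fin n, k < l → List.Lex (· < ·) (f (τ l)) (f (τ k)) := by
    intro k l hkl
    have : (f ∘ σ) l.rev < (f ∘ σ) k.rev := hsm (Fin.rev_lt_rev.mpr hkl)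
    exact this
  -- the cut points
  set W : List α := wpow x (2 * n) with hW
  have hWlen : W.length = 2 * n * L := by rw [hW, length_wpow]
  set p : ℕ → ℕ := fun k => if h : k < n then 2 * k * L + ((τ ⟨k, h⟩ : Fin n) : ℕ)
    else 2 * n * L with hp
  have hpval : ∀ k (h : k < n), p k = 2 * k * L + ((τ ⟨k, h⟩ : Fin n) : ℕ) := by
    intro k h; simp [hp, h]
  have hpn : ∀ k, n ≤ k → p k = 2 * n * L := by
    intro k h; simp [hp, Nat.not_lt.mpr h]
  have hτlt : ∀ k (h : k < n), ((τ ⟨k, h⟩ : Fin n) : ℕ) < n := fun k h => (τ ⟨k, h⟩).isLt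
  have hstep : ∀ k, k < n → p k + L ≤ p (k + 1) := by
    intro k hk
    have h1 := hτlt k hk
    have hub : 2 * (k + 1) * L ≤ p (k + 1) := by
      rcases Nat.lt_or_ge (k + 1) n with h | h
      · rw [hpval _ h]; omega
      · rw [hpn _ h]
        have : k + 1 ≤ n := hk
        nlinarith
    rw [hpval k hk]
    nlinarith
  have hmono : ∀ k, k < n → p k ≤ p (k + 1) := fun k hk => by
    have := hstep k hk; omega
  -- each rotation is a prefix of the corresponding suffix of W
  have hdropW : ∀ k (h : k < n), f (τ ⟨k, h⟩) <+: W.drop (p k) := by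
    intro k h
    set i : ℕ := ((τ ⟨k, h⟩ : Fin n) : ℕ) with hi
    have hiL : i < L := lt_of_lt_of_le (hτlt k h) hlen
    have hWsplit : W = wpow x (2 * k) ++ wpow x (2 * (n - k)) := by
      rw [hW, ← wpow_add]; congr 1; omega
    have hdrop1 : W.drop (2 * k * L) = wpow x (2 * (n - k)) := by
      rw [hWsplit, List.drop_left' (by rw [length_wpow, ← hL])]
    have h2 : 2 * (n - k) = 1 + (2 * (n - k) - 1) := by omega
    have h3 : 2 * (n - k) - 1 = 1 + (2 * (n - k) - 2) := by omega
    set R : List α := wpow x (2 * (n - k) - 1) with hR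
    have hsplit2 : wpow x (2 * (n - k)) = x ++ R := by
      rw [h2, wpow_add, wpow_one]
    have hRsplit : R = x ++ wpow x (2 * (n - k) - 2) := by
      rw [hR, h3, wpow_add, wpow_one]
    have hdropfull : W.drop (p k) = x.drop i ++ R := by
      rw [hpval k h, ← hi, ← List.drop_drop, hdrop1, hsplit2,
        List.drop_append_of_le_length hiL.le]
    rw [hdropfull]
    have hrot : f (τ ⟨k, h⟩) = x.drop i ++ x.take i := by
      rw [hf]; exact List.rotate_eq_drop_append_take hiL.le
    rw [hrot]
    have : x.take i <+: R := by
      rw [hRsplit]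
      exact (List.take_prefix i x).trans (List.prefix_append _ _)
    obtain ⟨w, hw⟩ := this
    exact ⟨w, by rw [List.append_assoc, hw]⟩
  -- define the factors
  set u : Fin n → List α :=
    fun k => (W.drop (p k)).take (p ((k : ℕ) + 1) - p (k : ℕ)) with hu
  have hufact : ∀ k : Fin n, f (τ k) <+: u k := by
    intro k
    have hk : (k : ℕ) < n := k.isLt
    have h1 : f (τ ⟨(k : ℕ), hk⟩) <+: W.drop (p (k : ℕ)) := hdropW _ hk
    have hlenf : (f (τ ⟨(k : ℕ), hk⟩)).length = L := by simp [hf, hL]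
    have h2 : f (τ ⟨(k : ℕ), hk⟩) <+: u k := by
      apply prefix_take_of_prefix h1
      rw [hlenf]
      have := hstep (k : ℕ) hk
      omega
    simpa using h2
  have hune : ∀ k : Fin n, u k ≠ [] := by
    intro k hnil
    have h := hufact k
    rw [hnil, List.prefix_nil] at h
    have h2 : (f (τ k)).length = L := by simp [hf, hL]
    rw [h] at h2
    simp at h2
    omega
  refine ⟨W.take (p 0), u, hune, ?_, ?_⟩
  · have hjoin : (List.ofFn u).flatten = W.drop (p 0) := by
      rw [hu]
      exact join_ofFn_take_drop n W p hmono (by rw [hWlen, hpn n le_rfl])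
    rw [hjoin, List.take_append_drop]
  · intro k l hkl
    have hlex : List.Lex (· < ·) (f (τ l)) (f (τ k)) := hdec k l hkl
    have hnp : ¬ f (τ l) <+: f (τ k) := by
      intro hpre
      have heq : f (τ l) = f (τ k) := hpre.eq_of_length (by simp [hf])
      have h3 : σ l.rev = σ k.rev := hfinj heq
      have h4 : l = k := Fin.rev_injective (σ.injective h3)
      exact absurd (h4 ▸ hkl) (lt_irrefl k)
    obtain ⟨ul, hul⟩ := hufact l
    obtain ⟨uk, huk⟩ := hufact k
    rw [← hul, ← huk]
    exact lex_append_of_lex hlex hnp
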